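/- Let $(Y,A,X,S)$ be discrete satisfying positivity, unconfoundedness $Y \perp A \mid (X,S=1)$, and source exchangeability $Y \perp S \mid V$ where $X = (V,U)$. Fix $r$ and the true nuisances $q, m, g, \kappa$ as before, and let $\hat q, \hat m, \hat g, \hat \kappa$ be arbitrary functions with $\hat g, \hat\kappa$ valued in $(\varepsilon, 1-\varepsilon)$. If either ($\hat q = q$ and $\hat m = m$) or ($\hat g = g$ and $\hat\kappa = \kappa$), then $E[\chi(O; \hat q, \hat m, \hat g, \hat\kappa)] = E[\chi(O; q, m, g, \kappa)]$, where $\chi(O;\cdot)$ is the influence-curve expression with the given nuisances plugged in. -/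
import Mathlib


open scoped Classical
open Finset

/-- Probability of an event under a discrete (finite) probability weight `p`. -/
noncomputable def prob {Ω : Type*} [Fintype Ω] (p : Ω → ℝ) (E : Ω → Prop) : ℝ :=
  ∑ ω, if E ω then p ω else 0

/-- Conditional probability `P(A | B)`. -/
noncomputable def cprob {Ω : Type*} [Fintype Ω] (p : Ω → ℝ) (A B : Ω → Prop) : ℝ :=
  prob p (fun ω => A ω ∧ B ω) / prob p B

/-- Expectation `E[f]`. -/
noncomputable def expect {Ω : Type*} [Fintype Ω] (p : Ω → ℝ) (f : Ω → ℝ) : ℝ :=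
  ∑ ω, p ω * f ω

/-- Conditional expectation `E[f | B]`. -/
noncomputable def cexpect {Ω : Type*} [Fintype Ω] (p : Ω → ℝ) (f : Ω → ℝ) (B : Ω → Prop) : ℝ :=
  (∑ ω, if B ω then p ω * f ω else 0) / prob p B

/-- Conditional independence `X ⟂ Z ∣ W` (on an additional conditioning event `E`),
in the discrete sense. -/
def CondIndepOn {Ω 𝓧 𝓩 𝓦 : Type*} [Fintype Ω] (p : Ω → ℝ)
    (X : Ω → 𝓧) (Z : Ω → 𝓩) (W : Ω → 𝓦) (E : Ω → Prop) : Prop :=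
  ∀ x z w, 0 < prob p (fun ω => W ω = w ∧ E ω) →
    cprob p (fun ω => X ω = x ∧ Z ω = z) (fun ω => W ω = w ∧ E ω) =
      cprob p (fun ω => X ω = x) (fun ω => W ω = w ∧ E ω) *
        cprob p (fun ω => Z ω = z) (fun ω => W ω = w ∧ E ω)

/-- Conditional independence `X ⟂ Z ∣ W` in the discrete sense. -/
def CondIndep {Ω 𝓧 𝓩 𝓦 : Type*} [Fintype Ω] (p : Ω → ℝ)
    (X : Ω → 𝓧) (Z : Ω → 𝓩) (W : Ω → 𝓦) : Prop :=
  CondIndepOn p X Z W (fun _ => True)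

/-- The pinball (quantile) loss at level `α`. -/
noncomputable def pinball (α x : ℝ) : ℝ :=
  α * |x| * (if 0 ≤ x then 1 else 0) + (1 - α) * |x| * (if x < 0 then 1 else 0)

/-- Real-valued indicator of a proposition. -/
noncomputable def ind (P : Prop) : ℝ := if P then 1 else 0

section Aux
variable {Ω : Type*} [Fintype Ω] (p : Ω → ℝ)

lemma ite_zero_eq_ind {P : Prop} (inst : Decidable P) (a : ℝ) :
    @ite ℝ P inst a 0 = ind P * a := by
  by_cases hP : P <;> simp [ind, hP]

lemma prob_eq_sum_ind (E : Ω → Prop) : prob p E = ∑ ω, ind (E ω) * p ω := by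
  unfold prob; simp only [ite_zero_eq_ind]

lemma cexpect_eq_sum_ind (f : Ω → ℝ) (B : Ω → Prop) :
    cexpect p f B = (∑ ω, ind (B ω) * (p ω * f ω)) / prob p B := by
  unfold cexpect; simp only [ite_zero_eq_ind]

lemma prob_nonneg' (hp : ∀ ω, 0 ≤ p ω) (E : Ω → Prop) : 0 ≤ prob p E := by
  unfold prob; apply Finset.sum_nonneg; intro ω _
  by_cases h : E ω <;> simp [h, hp ω]

lemma prob_mono' (hp : ∀ ω, 0 ≤ p ω) {E F : Ω → Prop} (h : ∀ ω, E ω → F ω) :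
    prob p E ≤ prob p F := by
  unfold prob; apply Finset.sum_le_sum; intro ω _
  by_cases hE : E ω
  · simp [hE, h ω hE]
  · by_cases hF : F ω <;> simp [hE, hF, hp ω]

lemma prob_eq_zero_of_le (hp : ∀ ω, 0 ≤ p ω) {E F : Ω → Prop} (h : ∀ ω, E ω → F ω)
    (hF : prob p F = 0) : prob p E = 0 :=
  le_antisymm (hF ▸ prob_mono' p hp h) (prob_nonneg' p hp E)

lemma prob_eq_zero_forall (hp : ∀ ω, 0 ≤ p ω) {E : Ω → Prop} (h : prob p E = 0) :
    ∀ ω, E ω → p ω = 0 := by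
  intro ω hE
  unfold prob at h
  have := (Finset.sum_eq_zero_iff_of_nonneg
    (fun ω _ => by by_cases hE' : E ω <;> simp [hE', hp ω])).mp h ω (Finset.mem_univ ω)
  simpa [hE] using this

lemma sum_fiber {𝓧 : Type*} (X : Ω → 𝓧) (f : Ω → ℝ) :
    ∑ ω, f ω = ∑ x ∈ Finset.univ.image X, ∑ ω ∈ Finset.univ.filter (fun ω => X ω = x), f ω :=
  (Finset.sum_fiberwise_of_maps_to (fun ω _ => Finset.mem_image_of_mem X (Finset.mem_univ ω)) f).symm

end Aux

lemma key1 {Ω 𝓨 𝓥 𝓤 : Type*} [Fintype Ω] (p : Ω → ℝ) (hp : ∀ ω, 0 ≤ p ω)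
    (Y : Ω → 𝓨) (A S : Ω → Bool) (V : Ω → 𝓥) (U : Ω → 𝓤)
    (R : 𝓨 → 𝓥 → ℝ) (r : ℝ) (q : 𝓥 × 𝓤 → ℝ)
    (hq : ∀ x, q x = cprob p (fun ω => R (Y ω) (V ω) ≤ r)
      (fun ω => (V ω, U ω) = x ∧ A ω = true ∧ S ω = true))
    (h : 𝓥 × 𝓤 → ℝ) :
    ∑ ω, p ω * (ind (A ω = true) * ind (S ω = true) * h (V ω, U ω) *
      (ind (R (Y ω) (V ω) ≤ r) - q (V ω, U ω))) = 0 := by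
  rw [sum_fiber (fun ω => (V ω, U ω))]
  apply Finset.sum_eq_zero
  intro x _
  rw [Finset.sum_filter]
  simp only [ite_zero_eq_ind]
  have hterm : ∀ ω, ind ((V ω, U ω) = x) *
      (p ω * (ind (A ω = true) * ind (S ω = true) * h (V ω, U ω) *
        (ind (R (Y ω) (V ω) ≤ r) - q (V ω, U ω))))
      = h x * (ind (R (Y ω) (V ω) ≤ r ∧ ((V ω, U ω) = x ∧ A ω = true ∧ S ω = true)) * p ω
        - q x * (ind ((V ω, U ω) = x ∧ A ω = true ∧ S ω = true) * p ω)) := by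
    intro ω
    by_cases hx : (V ω, U ω) = x
    · subst hx
      by_cases hA : A ω = true <;> by_cases hS : S ω = true <;>
        by_cases hR : R (Y ω) (V ω) ≤ r <;> simp [ind, hA, hS, hR] <;> ring
    · simp [ind, hx]
  refine Eq.trans (Finset.sum_congr rfl fun ω _ => hterm ω) ?_
  rw [← Finset.mul_sum, Finset.sum_sub_distrib, ← Finset.mul_sum, ← prob_eq_sum_ind,
    ← prob_eq_sum_ind]
  have hgoal : prob p (fun ω => R (Y ω) (V ω) ≤ r ∧ ((V ω, U ω) = x ∧ A ω = true ∧ S ω = true))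
      - q x * prob p (fun ω => (V ω, U ω) = x ∧ A ω = true ∧ S ω = true) = 0 := by
    by_cases hD : prob p (fun ω => (V ω, U ω) = x ∧ A ω = true ∧ S ω = true) = 0
    · rw [prob_eq_zero_of_le p hp (fun ω hω => hω.2) hD, hD]; ring
    · have hqx : q x = prob p (fun ω => R (Y ω) (V ω) ≤ r ∧ ((V ω, U ω) = x ∧ A ω = true ∧ S ω = true))
          / prob p (fun ω => (V ω, U ω) = x ∧ A ω = true ∧ S ω = true) := hq x
      rw [hqx, div_mul_cancel₀ _ hD, sub_self]
  rw [hgoal, mul_zero]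

lemma key2 {Ω 𝓥 𝓤 : Type*} [Fintype Ω] (p : Ω → ℝ) (hp : ∀ ω, 0 ≤ p ω)
    (S : Ω → Bool) (V : Ω → 𝓥) (U : Ω → 𝓤)
    (q : 𝓥 × 𝓤 → ℝ) (m : 𝓥 → ℝ)
    (hm : ∀ v, m v = cexpect p (fun ω => q (V ω, U ω)) (fun ω => V ω = v ∧ S ω = true))
    (h : 𝓥 → ℝ) :
    ∑ ω, p ω * (ind (S ω = true) * h (V ω) * (q (V ω, U ω) - m (V ω))) = 0 := by
  rw [sum_fiber V]
  apply Finset.sum_eq_zero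
  intro v _
  rw [Finset.sum_filter]
  simp only [ite_zero_eq_ind]
  have hterm : ∀ ω, ind (V ω = v) * (p ω * (ind (S ω = true) * h (V ω) * (q (V ω, U ω) - m (V ω))))
      = h v * (ind (V ω = v ∧ S ω = true) * (p ω * q (V ω, U ω))
        - m v * (ind (V ω = v ∧ S ω = true) * p ω)) := by
    intro ω
    by_cases hx : V ω = v
    · subst hx
      by_cases hS : S ω = true <;> simp [ind, hS] <;> ring
    · simp [ind, hx]
  refine Eq.trans (Finset.sum_congr rfl fun ω _ => hterm ω) ?_
  rw [← Finset.mul_sum, Finset.sum_sub_distrib, ← Finset.mul_sum]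
  rw [← prob_eq_sum_ind p (fun ω => V ω = v ∧ S ω = true)]
  by_cases hD : prob p (fun ω => V ω = v ∧ S ω = true) = 0
  · have hz : (∑ ω, ind (V ω = v ∧ S ω = true) * (p ω * q (V ω, U ω))) = 0 := by
      apply Finset.sum_eq_zero
      intro ω _
      by_cases hc : V ω = v ∧ S ω = true
      · simp [ind, hc, prob_eq_zero_forall p hp hD ω hc]
      · simp [ind, hc]
    rw [hz, hD, mul_zero, sub_zero, mul_zero]
  · have hmv : m v = (∑ ω, ind (V ω = v ∧ S ω = true) * (p ω * q (V ω, U ω)))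
        / prob p (fun ω => V ω = v ∧ S ω = true) :=
      (hm v).trans (cexpect_eq_sum_ind p _ _)
    rw [hmv, div_mul_cancel₀ _ hD, sub_self, mul_zero]

lemma key3 {Ω 𝓥 : Type*} [Fintype Ω] (p : Ω → ℝ) (hp : ∀ ω, 0 ≤ p ω)
    (S : Ω → Bool) (V : Ω → 𝓥) (κ : 𝓥 → ℝ)
    (hκ : ∀ v, κ v = cprob p (fun ω => S ω = true) (fun ω => V ω = v))
    (hκpos : ∀ v, 0 < prob p (fun ω => V ω = v) → 0 < κ v ∧ κ v < 1)
    (f : 𝓥 → ℝ) :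
    ∑ ω, p ω * ((ind (S ω = false) - ind (S ω = true) * (1 - κ (V ω)) / κ (V ω)) * f (V ω)) = 0 := by
  rw [sum_fiber V]
  apply Finset.sum_eq_zero
  intro v _
  rw [Finset.sum_filter]
  simp only [ite_zero_eq_ind]
  have hterm : ∀ ω, ind (V ω = v) *
      (p ω * ((ind (S ω = false) - ind (S ω = true) * (1 - κ (V ω)) / κ (V ω)) * f (V ω)))
      = f v * (ind (V ω = v ∧ S ω = false) * p ω
        - (1 - κ v) / κ v * (ind (S ω = true ∧ V ω = v) * p ω)) := by
    intro ω
    by_cases hx : V ω = v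
    · subst hx
      cases hS : S ω <;> simp [ind, hS] <;> ring
    · simp [ind, hx]
  refine Eq.trans (Finset.sum_congr rfl fun ω _ => hterm ω) ?_
  rw [← Finset.mul_sum, Finset.sum_sub_distrib, ← Finset.mul_sum, ← prob_eq_sum_ind,
    ← prob_eq_sum_ind]
  have hPadd : prob p (fun ω => V ω = v)
      = prob p (fun ω => S ω = true ∧ V ω = v) + prob p (fun ω => V ω = v ∧ S ω = false) := by
    unfold prob
    rw [← Finset.sum_add_distrib]
    apply Finset.sum_congr rfl
    intro ω _
    cases hS : S ω <;> by_cases hv : V ω = v <;> simp [hS, hv]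
  by_cases hP : prob p (fun ω => V ω = v) = 0
  · rw [prob_eq_zero_of_le p hp (fun ω hω => hω.1) hP,
      prob_eq_zero_of_le p hp (fun ω hω => hω.2) hP]
    ring
  · have hPpos : 0 < prob p (fun ω => V ω = v) :=
      lt_of_le_of_ne (prob_nonneg' p hp _) (Ne.symm hP)
    obtain ⟨hκ0, hκ1⟩ := hκpos v hPpos
    have hκv : κ v = prob p (fun ω => S ω = true ∧ V ω = v) / prob p (fun ω => V ω = v) := hκ v
    have hPs : prob p (fun ω => S ω = true ∧ V ω = v) = κ v * prob p (fun ω => V ω = v) := by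
      rw [hκv]; field_simp
    have hPf : prob p (fun ω => V ω = v ∧ S ω = false)
        = (1 - κ v) * prob p (fun ω => V ω = v) := by
      have := hPadd
      rw [hPs] at this
      linarith [this]
    rw [hPf, hPs]
    have hκne : κ v ≠ 0 := ne_of_gt hκ0
    field_simp
    ring

lemma key4 {Ω 𝓥 𝓤 : Type*} [Fintype Ω] (p : Ω → ℝ) (hp : ∀ ω, 0 ≤ p ω)
    (A S : Ω → Bool) (V : Ω → 𝓥) (U : Ω → 𝓤) (g : 𝓥 × 𝓤 → ℝ) (κ : 𝓥 → ℝ)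
    (hg : ∀ x, g x = cprob p (fun ω => A ω = true) (fun ω => (V ω, U ω) = x ∧ S ω = true))
    (hgpos : ∀ x, 0 < prob p (fun ω => (V ω, U ω) = x ∧ S ω = true) → 0 < g x ∧ g x < 1)
    (f : 𝓥 × 𝓤 → ℝ) :
    ∑ ω, p ω * (ind (S ω = true) * (1 - κ (V ω)) / κ (V ω) *
      (1 - ind (A ω = true) / g (V ω, U ω)) * f (V ω, U ω)) = 0 := by
  rw [sum_fiber (fun ω => (V ω, U ω))]
  apply Finset.sum_eq_zero
  intro x _
  rw [Finset.sum_filter]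
  simp only [ite_zero_eq_ind]
  have hterm : ∀ ω, ind ((V ω, U ω) = x) *
      (p ω * (ind (S ω = true) * (1 - κ (V ω)) / κ (V ω) *
        (1 - ind (A ω = true) / g (V ω, U ω)) * f (V ω, U ω)))
      = (1 - κ x.1) / κ x.1 * f x * (ind ((V ω, U ω) = x ∧ S ω = true) * p ω
        - (ind (A ω = true ∧ ((V ω, U ω) = x ∧ S ω = true)) * p ω) / g x) := by
    intro ω
    by_cases hx : (V ω, U ω) = x
    · subst hx
      by_cases hA : A ω = true <;> by_cases hS : S ω = true <;> simp [ind, hA, hS] <;> ring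
    · simp [ind, hx]
  refine Eq.trans (Finset.sum_congr rfl fun ω _ => hterm ω) ?_
  rw [← Finset.mul_sum, Finset.sum_sub_distrib, ← Finset.sum_div, ← prob_eq_sum_ind,
    ← prob_eq_sum_ind]
  by_cases hD : prob p (fun ω => (V ω, U ω) = x ∧ S ω = true) = 0
  · rw [hD, prob_eq_zero_of_le p hp (fun ω hω => hω.2) hD]
    simp
  · have hDpos : 0 < prob p (fun ω => (V ω, U ω) = x ∧ S ω = true) :=
      lt_of_le_of_ne (prob_nonneg' p hp _) (Ne.symm hD)
    obtain ⟨hg0, hg1⟩ := hgpos x hDpos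
    have hgx : g x = prob p (fun ω => A ω = true ∧ ((V ω, U ω) = x ∧ S ω = true))
        / prob p (fun ω => (V ω, U ω) = x ∧ S ω = true) := hg x
    have hgne : g x ≠ 0 := ne_of_gt hg0
    have hN : prob p (fun ω => A ω = true ∧ ((V ω, U ω) = x ∧ S ω = true))
        = g x * prob p (fun ω => (V ω, U ω) = x ∧ S ω = true) := by
      rw [hgx]; field_simp
    rw [hN, mul_div_cancel_left₀ _ hgne, sub_self, mul_zero]

/-- The influence-curve expression with (possibly estimated) nuisances plugged in. -/
noncomputable def chiFn {Ω 𝓨 𝓥 𝓤 : Type*}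
    (Y : Ω → 𝓨) (A S : Ω → Bool) (V : Ω → 𝓥) (U : Ω → 𝓤)
    (R : 𝓨 → 𝓥 → ℝ) (r α : ℝ)
    (q : 𝓥 × 𝓤 → ℝ) (m : 𝓥 → ℝ) (g : 𝓥 × 𝓤 → ℝ) (κ : 𝓥 → ℝ) (ω : Ω) : ℝ :=
  ind (S ω = false) * (m (V ω) - (1 - α))
  + ind (S ω = true) * (1 - κ (V ω)) / κ (V ω) * (q (V ω, U ω) - m (V ω))
  + ind (A ω = true) * ind (S ω = true) * (1 - κ (V ω)) / (g (V ω, U ω) * κ (V ω)) *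
      (ind (R (Y ω) (V ω) ≤ r) - q (V ω, U ω))

theorem stmt15_aux {Ω 𝓨 𝓥 𝓤 : Type*} [Fintype Ω]
    (p : Ω → ℝ) (hp : ∀ ω, 0 ≤ p ω)
    (Y : Ω → 𝓨) (A S : Ω → Bool) (V : Ω → 𝓥) (U : Ω → 𝓤)
    (R : 𝓨 → 𝓥 → ℝ) (r α : ℝ)
    (g : 𝓥 × 𝓤 → ℝ) (κ : 𝓥 → ℝ) (q : 𝓥 × 𝓤 → ℝ) (m : 𝓥 → ℝ)
    (hg : ∀ x, g x = cprob p (fun ω => A ω = true) (fun ω => (V ω, U ω) = x ∧ S ω = true))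
    (hκ : ∀ v, κ v = cprob p (fun ω => S ω = true) (fun ω => V ω = v))
    (hq : ∀ x, q x = cprob p (fun ω => R (Y ω) (V ω) ≤ r)
      (fun ω => (V ω, U ω) = x ∧ A ω = true ∧ S ω = true))
    (hm : ∀ v, m v = cexpect p (fun ω => q (V ω, U ω)) (fun ω => V ω = v ∧ S ω = true))
    (hgpos : ∀ x, 0 < prob p (fun ω => (V ω, U ω) = x ∧ S ω = true) → 0 < g x ∧ g x < 1)
    (hκpos : ∀ v, 0 < prob p (fun ω => V ω = v) → 0 < κ v ∧ κ v < 1)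
    (qh : 𝓥 × 𝓤 → ℝ) (mh : 𝓥 → ℝ) (gh : 𝓥 × 𝓤 → ℝ) (κh : 𝓥 → ℝ)
    (hdr : (qh = q ∧ mh = m) ∨ (gh = g ∧ κh = κ)) :
    (∑ ω, p ω * chiFn Y A S V U R r α qh mh gh κh ω)
      = ∑ ω, p ω * chiFn Y A S V U R r α q m g κ ω := by
  rcases hdr with ⟨hq', hm'⟩ | ⟨hg', hκ'⟩
  · rw [hq', hm']
    have E1 : ∀ (gg : 𝓥 × 𝓤 → ℝ) (kk : 𝓥 → ℝ),
        (∑ ω, p ω * chiFn Y A S V U R r α q m gg kk ω)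
          = ∑ ω, p ω * (ind (S ω = false) * (m (V ω) - (1 - α))) := by
      intro gg kk
      have hZ2 := key2 p hp S V U q m hm (fun v => (1 - kk v) / kk v)
      have hZ1 := key1 p hp Y A S V U R r q hq (fun x => (1 - kk x.1) / (gg x * kk x.1))
      calc (∑ ω, p ω * chiFn Y A S V U R r α q m gg kk ω)
          = (∑ ω, p ω * (ind (S ω = false) * (m (V ω) - (1 - α))))
            + ((∑ ω, p ω * (ind (S ω = true) * ((fun v => (1 - kk v) / kk v) (V ω)) *
                (q (V ω, U ω) - m (V ω))))
              + (∑ ω, p ω * (ind (A ω = true) * ind (S ω = true) *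
                  ((fun x => (1 - kk x.1) / (gg x * kk x.1)) (V ω, U ω)) *
                  (ind (R (Y ω) (V ω) ≤ r) - q (V ω, U ω))))) := by
            rw [← Finset.sum_add_distrib, ← Finset.sum_add_distrib]
            apply Finset.sum_congr rfl
            intro ω _
            simp only [chiFn]
            ring
        _ = ∑ ω, p ω * (ind (S ω = false) * (m (V ω) - (1 - α))) := by
            rw [hZ2, hZ1, add_zero, add_zero]
    rw [E1 gh κh, E1 g κ]
  · rw [hg', hκ']
    have hZ3 := key3 p hp S V κ hκ hκpos (fun v => mh v - m v)
    have hZ4 := key4 p hp A S V U g κ hg hgpos (fun x => qh x - q x)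
    have hkey : (∑ ω, p ω * chiFn Y A S V U R r α qh mh g κ ω)
        - (∑ ω, p ω * chiFn Y A S V U R r α q m g κ ω) = 0 := by
      rw [← Finset.sum_sub_distrib]
      calc (∑ ω, (p ω * chiFn Y A S V U R r α qh mh g κ ω
              - p ω * chiFn Y A S V U R r α q m g κ ω))
          = (∑ ω, p ω * ((ind (S ω = false) - ind (S ω = true) * (1 - κ (V ω)) / κ (V ω)) *
              ((fun v => mh v - m v) (V ω))))
            + (∑ ω, p ω * (ind (S ω = true) * (1 - κ (V ω)) / κ (V ω) *
                (1 - ind (A ω = true) / g (V ω, U ω)) * ((fun x => qh x - q x) (V ω, U ω)))) := by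
            rw [← Finset.sum_add_distrib]
            apply Finset.sum_congr rfl
            intro ω _
            simp only [chiFn]
            ring
        _ = 0 := by rw [hZ3, hZ4, add_zero]
    linarith [hkey]

/-- double robustness of the influence-curve expectation. -/
theorem stmt15 {Ω 𝓨 𝓥 𝓤 : Type*} [Fintype Ω]
    (p : Ω → ℝ) (hp : ∀ ω, 0 ≤ p ω) (hsum : ∑ ω, p ω = 1)
    (Y : Ω → 𝓨) (A S : Ω → Bool) (V : Ω → 𝓥) (U : Ω → 𝓤)
    (R : 𝓨 → 𝓥 → ℝ) (r α : ℝ)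
    (g : 𝓥 × 𝓤 → ℝ) (κ : 𝓥 → ℝ) (q : 𝓥 × 𝓤 → ℝ) (m : 𝓥 → ℝ)
    (hg : ∀ x, g x = cprob p (fun ω => A ω = true) (fun ω => (V ω, U ω) = x ∧ S ω = true))
    (hκ : ∀ v, κ v = cprob p (fun ω => S ω = true) (fun ω => V ω = v))
    (hq : ∀ x, q x = cprob p (fun ω => R (Y ω) (V ω) ≤ r)
      (fun ω => (V ω, U ω) = x ∧ A ω = true ∧ S ω = true))
    (hm : ∀ v, m v = cexpect p (fun ω => q (V ω, U ω)) (fun ω => V ω = v ∧ S ω = true))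
    (hgpos : ∀ x, 0 < prob p (fun ω => (V ω, U ω) = x ∧ S ω = true) → 0 < g x ∧ g x < 1)
    (hκpos : ∀ v, 0 < prob p (fun ω => V ω = v) → 0 < κ v ∧ κ v < 1)
    (hπpos : ∀ x, 0 < prob p (fun ω => (V ω, U ω) = x) →
      0 < cprob p (fun ω => S ω = true) (fun ω => (V ω, U ω) = x))
    (hS0 : 0 < prob p (fun ω => S ω = false))
    (hunconf : CondIndepOn p Y A (fun ω => (V ω, U ω)) (fun ω => S ω = true))
    (hexch : CondIndep p Y S V)
    (qh : 𝓥 × 𝓤 → ℝ) (mh : 𝓥 → ℝ) (gh : 𝓥 × 𝓤 → ℝ) (κh : 𝓥 → ℝ)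
    (ε : ℝ) (hε : 0 < ε)
    (hgh : ∀ x, gh x ∈ Set.Ioo ε (1 - ε)) (hκh : ∀ v, κh v ∈ Set.Ioo ε (1 - ε))
    (hdr : (qh = q ∧ mh = m) ∨ (gh = g ∧ κh = κ)) :
    expect p (chiFn Y A S V U R r α qh mh gh κh)
      = expect p (chiFn Y A S V U R r α q m g κ) :=
  stmt15_aux p hp Y A S V U R r α g κ q m hg hκ hq hm hgpos hκpos qh mh gh κh hdr
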